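/- Let a_1, ..., a_n be rational numbers, and suppose there exists a finite Galois extension L/Q and elements θ_1, ..., θ_n of L, all conjugate under Gal(L/Q), with Σ a_i θ_i = 0 and θ_1 ≠ 0. Then there exist N ≥ 1 and permutation matrices Π_1, ..., Π_n of size N such that det(Σ_i a_i Π_i) = 0. -/

import Mathlib

theorem stmt_7 (n : ℕ) (a : Fin n → ℚ)
    (L : Type*) [Field L] [Algebra ℚ L] [FiniteDimensional ℚ L] [IsGalois ℚ L]
    (θ : Fin n → L)
    (hconj : ∀ i j : Fin n, ∃ σ : L ≃ₐ[ℚ] L, σ (θ i) = θ j)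
    (hrel : ∑ i, a i • θ i = 0)
    (hn : 0 < n) (hθ : θ ⟨0, hn⟩ ≠ 0) :
    ∃ (N : ℕ), 1 ≤ N ∧ ∃ P : Fin n → Equiv.Perm (Fin N),
      Matrix.det (∑ i, a i • (Matrix.of fun k l : Fin N =>
        if P i l = k then (1 : ℚ) else 0)) = 0 := by
  classical
  set G := L ≃ₐ[ℚ] L
  refine ⟨Fintype.card G, Fintype.card_pos, ?_⟩
  let e : Fin (Fintype.card G) ≃ G := (Fintype.equivFin G).symm
  choose σ hσ using fun i => hconj ⟨0, hn⟩ i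
  let P : Fin n → Equiv.Perm (Fin (Fintype.card G)) := fun i =>
    (e.trans (Equiv.mulRight (σ i)⁻¹)).trans e.symm
  refine ⟨P, ?_⟩
  set M : Matrix (Fin (Fintype.card G)) (Fin (Fintype.card G)) ℚ :=
    ∑ i, a i • (Matrix.of fun k l => if P i l = k then (1 : ℚ) else 0) with hM
  have key : (M.map (algebraMap ℚ L)).det = 0 := by
    rw [← Matrix.exists_mulVec_eq_zero_iff]
    refine ⟨fun k => (e k) (θ ⟨0, hn⟩), ?_, ?_⟩
    · intro h
      exact hθ ((map_eq_zero_iff _ (e (e.symm 1)).injective).mp (congrFun h (e.symm 1)))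
    · funext k
      have : (M.map (algebraMap ℚ L)).mulVec (fun k => (e k) (θ ⟨0, hn⟩)) k
          = ∑ l, (algebraMap ℚ L) (M k l) * (e l) (θ ⟨0, hn⟩) := by
        simp [Matrix.mulVec, Matrix.map_apply, dotProduct]
      rw [this]
      have entry : ∀ l, M k l = ∑ i, a i * (if P i l = k then (1 : ℚ) else 0) := by
        intro l
        simp [hM, Matrix.sum_apply, Matrix.smul_apply, Matrix.of_apply, smul_eq_mul]
      calc ∑ l, (algebraMap ℚ L) (M k l) * (e l) (θ ⟨0, hn⟩)
          = ∑ l, ∑ i, (algebraMap ℚ L) (a i) * ((if P i l = k then (1:L) else 0) * (e l) (θ ⟨0, hn⟩)) := by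
            refine Finset.sum_congr rfl fun l _ => ?_
            rw [entry l, map_sum, Finset.sum_mul]
            refine Finset.sum_congr rfl fun i _ => ?_
            rw [map_mul]
            split_ifs <;> simp [mul_assoc]
        _ = ∑ i, ∑ l, (algebraMap ℚ L) (a i) * ((if P i l = k then (1:L) else 0) * (e l) (θ ⟨0, hn⟩)) :=
            Finset.sum_comm
        _ = ∑ i, (algebraMap ℚ L) (a i) * (e ((P i)⁻¹ k)) (θ ⟨0, hn⟩) := by
            refine Finset.sum_congr rfl fun i _ => ?_
            rw [← Finset.mul_sum]
            congr 1
            rw [Finset.sum_eq_single ((P i)⁻¹ k)]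
            · simp
            · intro l _ hne
              rw [if_neg, zero_mul]
              intro hc
              exact hne (by rw [← hc]; simp)
            · simp
        _ = ∑ i, (e k) (a i • θ i) := by
            refine Finset.sum_congr rfl fun i _ => ?_
            have h1 : e ((P i)⁻¹ k) = e k * σ i := by
              simp [P, Equiv.Perm.inv_def, e]
              exact inv_inv _
            rw [h1]
            have : (e k * σ i) (θ ⟨0, hn⟩) = (e k) (θ i) := by
              show (e k) ((σ i) (θ ⟨0, hn⟩)) = _
              rw [hσ i]
            rw [this, map_smul, Algebra.smul_def]
        _ = 0 := by rw [← map_sum, hrel, map_zero]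
  have hd := RingHom.map_det (algebraMap ℚ L) M
  rw [RingHom.mapMatrix_apply] at hd
  rw [← hd] at key
  exact (map_eq_zero_iff _ (algebraMap ℚ L).injective).mp key
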